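/- Fix 0 < p < 1 and for τ ≥ 0 let κ_p(τ) denote the unique κ > τ/p with (κ/2)·Λ*(τ/κ) = 1. Then the function τ ↦ κ_p(τ) is continuous and strictly increasing on [0, ∞), satisfies κ_p(0) = 2/ln(1/(1−p)), and κ_p(τ) ~ τ/p as τ → ∞ (i.e. p·κ_p(τ)/τ → 1). -/

import Mathlib

open MeasureTheory Filter
open scoped ENNReal NNReal

/-- The Bernoulli(p) measure on `Bool`. -/
noncomputable def bernoulliBool (p : ℝ) : Measure Bool :=
  p.toNNReal • Measure.dirac true + (1 - p).toNNReal • Measure.dirac false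

instance (p : ℝ) : IsFiniteMeasure (bernoulliBool p) := by
  unfold bernoulliBool; infer_instance

instance (n : ℕ) : MeasurableSpace (SimpleGraph (Fin n)) := ⊤

/-- The Erdős–Rényi random graph `G(n,p)`: the distribution of the simple graph on `Fin n`
obtained by including each possible edge independently with probability `p`. -/
noncomputable def erMeasure (n : ℕ) (p : ℝ) : Measure (SimpleGraph (Fin n)) :=
  Measure.map (fun f : Sym2 (Fin n) → Bool => SimpleGraph.fromEdgeSet {e | f e = true})
    (Measure.pi fun _ : Sym2 (Fin n) => bernoulliBool p)

/-- A set `S` of vertices is `t`-dependent if the induced subgraph has maximum degree at most `t`,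
i.e. every vertex of `S` has at most `t` neighbours inside `S`. -/
def IsTDependent {V : Type*} (G : SimpleGraph V) (t : ℕ) (S : Set V) : Prop :=
  ∀ v ∈ S, {u ∈ S | G.Adj v u}.ncard ≤ t

/-- The `t`-improper chromatic number: the least number of colours in a vertex colouring
in which every colour class is `t`-dependent. -/
noncomputable def improperChromaticNumber {V : Type*} (G : SimpleGraph V) (t : ℕ) : ℕ :=
  sInf {k | ∃ c : V → Fin k, ∀ i : Fin k, IsTDependent G t {v | c v = i}}

/-- The `t`-dependence number: the maximum size of a `t`-dependent set. -/
noncomputable def tDependenceNumber {V : Type*} (G : SimpleGraph V) (t : ℕ) : ℕ :=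
  sSup {m | ∃ S : Set V, S.ncard = m ∧ IsTDependent G t S}

/-- The Fenchel–Legendre transform `Λ*(x) = x ln(x/p) + (1-x) ln((1-x)/(1-p))`
(with the conventions `Λ*(0) = ln(1/(1-p))`, `Λ*(1) = ln(1/p)`, which hold automatically
since `Real.log 0 = 0` in Lean). -/
noncomputable def LambdaStar (p x : ℝ) : ℝ :=
  x * Real.log (x / p) + (1 - x) * Real.log ((1 - x) / (1 - p))

lemma lam_zero {p : ℝ} : LambdaStar p 0 = Real.log (1 / (1 - p)) := by
  simp [LambdaStar]

lemma lam_p {p : ℝ} (hp0 : 0 < p) (hp1 : p < 1) : LambdaStar p p = 0 := by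
  have h1 : p / p = 1 := div_self hp0.ne'
  have h2 : (1 - p) / (1 - p) = 1 := div_self (by linarith)
  simp [LambdaStar, h1, h2]

lemma lam_hasDerivAt {p x : ℝ} (hp0 : 0 < p) (hp1 : p < 1) (hx0 : 0 < x) (hx1 : x < 1) :
    HasDerivAt (LambdaStar p) (Real.log (x / p) - Real.log ((1 - x) / (1 - p))) x := by
  have hq : (0:ℝ) < 1 - p := by linarith
  have hx1' : (0:ℝ) < 1 - x := by linarith
  have h1 : HasDerivAt (fun y : ℝ => y / p) (1 / p) x := (hasDerivAt_id x).div_const p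
  have hlog1 : HasDerivAt (fun y : ℝ => Real.log (y / p)) ((1 / p) / (x / p)) x :=
    h1.log (by positivity)
  have hmul1 : HasDerivAt (fun y : ℝ => y * Real.log (y / p))
      (1 * Real.log (x / p) + x * ((1 / p) / (x / p))) x := (hasDerivAt_id x).mul hlog1
  have h2 : HasDerivAt (fun y : ℝ => (1 - y) / (1 - p)) ((0 - 1) / (1 - p)) x :=
    (((hasDerivAt_const x (1:ℝ)).sub (hasDerivAt_id x))).div_const (1 - p)
  have hlog2 : HasDerivAt (fun y : ℝ => Real.log ((1 - y) / (1 - p)))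
      (((0 - 1) / (1 - p)) / ((1 - x) / (1 - p))) x := h2.log (by positivity)
  have hmul2 : HasDerivAt (fun y : ℝ => (1 - y) * Real.log ((1 - y) / (1 - p)))
      ((0 - 1) * Real.log ((1 - x) / (1 - p)) + (1 - x) * (((0 - 1) / (1 - p)) / ((1 - x) / (1 - p)))) x :=
    ((hasDerivAt_const x (1:ℝ)).sub (hasDerivAt_id x)).mul hlog2
  have := hmul1.add hmul2
  refine this.congr_deriv ?_
  field_simp
  ring

lemma lam_continuousOn {p : ℝ} (hp0 : 0 < p) (hp1 : p < 1) :
    ContinuousOn (LambdaStar p) (Set.Icc 0 p) := by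
  have hq : (0:ℝ) < 1 - p := by linarith
  have h2 : ContinuousOn (fun x : ℝ => (1 - x) * Real.log ((1 - x) / (1 - p))) (Set.Icc 0 p) := by
    apply ContinuousOn.mul (by fun_prop)
    apply ContinuousOn.log (by fun_prop)
    intro x hx
    have : (0:ℝ) < 1 - x := by have := hx.2; linarith
    positivity
  have h1 : ContinuousOn (fun x : ℝ => x * Real.log x - x * Real.log p) (Set.Icc 0 p) :=
    (Real.continuous_mul_log.sub (continuous_id.mul continuous_const)).continuousOn
  have heq : Set.EqOn (fun x : ℝ => x * Real.log x - x * Real.log p)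
      (fun x : ℝ => x * Real.log (x / p)) (Set.Icc 0 p) := by
    intro x hx
    rcases eq_or_lt_of_le hx.1 with h | h
    · simp [← h]
    · simp only []
      rw [Real.log_div h.ne' hp0.ne']
      ring
  exact ((h1.congr heq.symm).add h2)

lemma lam_strictAntiOn {p : ℝ} (hp0 : 0 < p) (hp1 : p < 1) :
    StrictAntiOn (LambdaStar p) (Set.Icc 0 p) := by
  apply strictAntiOn_of_deriv_neg (convex_Icc 0 p) (lam_continuousOn hp0 hp1)
  intro x hx
  rw [interior_Icc] at hx
  obtain ⟨hxa, hxb⟩ := hx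
  have hx : x ∈ Set.Ioo 0 p := ⟨hxa, hxb⟩
  have hd := lam_hasDerivAt hp0 hp1 hx.1 (hx.2.trans hp1)
  rw [hd.deriv]
  have h1 : Real.log (x / p) < 0 :=
    Real.log_neg (by positivity) ((div_lt_one hp0).2 hx.2)
  have h2 : 0 < Real.log ((1 - x) / (1 - p)) := by
    apply Real.log_pos
    rw [lt_div_iff₀ (by linarith)]
    linarith
  linarith

lemma G_strictAntiOn {p : ℝ} (hp0 : 0 < p) (hp1 : p < 1) :
    StrictAntiOn (fun x => LambdaStar p x / x) (Set.Ioc 0 p) := by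
  apply strictAntiOn_of_deriv_neg (convex_Ioc 0 p)
  · exact ((lam_continuousOn hp0 hp1).mono Set.Ioc_subset_Icc_self).div
      continuousOn_id (fun x hx => hx.1.ne')
  · intro x hx
    rw [interior_Ioc] at hx
    obtain ⟨hxa, hxb⟩ := hx
    have hx : x ∈ Set.Ioo 0 p := ⟨hxa, hxb⟩
    have hd := lam_hasDerivAt hp0 hp1 hx.1 (hx.2.trans hp1)
    have hdiv : HasDerivAt (fun x => LambdaStar p x / x)
        (((Real.log (x / p) - Real.log ((1 - x) / (1 - p))) * x - LambdaStar p x * 1) / x ^ 2) x :=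
      hd.div (hasDerivAt_id x) hx.1.ne'
    rw [hdiv.deriv]
    have hnum : (Real.log (x / p) - Real.log ((1 - x) / (1 - p))) * x - LambdaStar p x * 1
        = -Real.log ((1 - x) / (1 - p)) := by
      unfold LambdaStar; ring
    rw [hnum]
    have h2 : 0 < Real.log ((1 - x) / (1 - p)) := by
      apply Real.log_pos
      rw [lt_div_iff₀ (by linarith)]
      linarith
    have hx2 : (0:ℝ) < x ^ 2 := by positivity
    exact div_neg_of_neg_of_pos (by linarith) hx2

lemma F_lt {p τ : ℝ} (hp0 : 0 < p) (hp1 : p < 1) (hτ : 0 ≤ τ) {κ₁ κ₂ : ℝ}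
    (h1 : τ / p < κ₁) (h12 : κ₁ < κ₂) :
    κ₁ / 2 * LambdaStar p (τ / κ₁) < κ₂ / 2 * LambdaStar p (τ / κ₂) := by
  rcases eq_or_lt_of_le hτ with h | hτ
  · subst h
    simp only [zero_div] at h1 ⊢
    rw [lam_zero]
    have hL : 0 < Real.log (1 / (1 - p)) := by
      apply Real.log_pos
      rw [lt_div_iff₀ (by linarith)]; linarith
    have : κ₁ / 2 < κ₂ / 2 := by linarith
    exact mul_lt_mul_of_pos_right this hL
  · have hκ1 : 0 < κ₁ := lt_trans (by positivity) h1
    have hκ2 : 0 < κ₂ := hκ1.trans h12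
    have hx1p : τ / κ₁ < p := by
      rw [div_lt_iff₀ hκ1]
      have := (div_lt_iff₀ hp0).1 h1
      linarith [mul_comm κ₁ p]
    have hx2x1 : τ / κ₂ < τ / κ₁ := by
      apply div_lt_div_of_pos_left hτ hκ1 h12
    have hx1 : τ / κ₁ ∈ Set.Ioc 0 p := ⟨by positivity, le_of_lt hx1p⟩
    have hx2 : τ / κ₂ ∈ Set.Ioc 0 p := ⟨by positivity, le_of_lt (hx2x1.trans hx1p)⟩
    have hG := G_strictAntiOn hp0 hp1 hx2 hx1 hx2x1
    simp only [] at hG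
    have e1 : κ₁ / 2 * LambdaStar p (τ / κ₁) = τ / 2 * (LambdaStar p (τ / κ₁) / (τ / κ₁)) := by
      field_simp
    have e2 : κ₂ / 2 * LambdaStar p (τ / κ₂) = τ / 2 * (LambdaStar p (τ / κ₂) / (τ / κ₂)) := by
      field_simp
    rw [e1, e2]
    exact mul_lt_mul_of_pos_left hG (by positivity)

lemma F_anti {p κ τ₁ τ₂ : ℝ} (hp0 : 0 < p) (hp1 : p < 1) (hτ1 : 0 ≤ τ₁) (h12 : τ₁ < τ₂)
    (hκ : τ₂ / p < κ) :
    κ / 2 * LambdaStar p (τ₂ / κ) < κ / 2 * LambdaStar p (τ₁ / κ) := by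
  have hτ2 : 0 < τ₂ := lt_of_le_of_lt hτ1 h12
  have hκ0 : 0 < κ := lt_trans (by positivity) hκ
  have hx2p : τ₂ / κ < p := by
    rw [div_lt_iff₀ hκ0]
    have := (div_lt_iff₀ hp0).1 hκ
    linarith [mul_comm κ p]
  have hx12 : τ₁ / κ < τ₂ / κ := by
    apply div_lt_div_of_pos_right h12 hκ0
  have h1 : τ₁ / κ ∈ Set.Icc 0 p := ⟨by positivity, le_of_lt (hx12.trans hx2p)⟩
  have h2 : τ₂ / κ ∈ Set.Icc 0 p := ⟨by positivity, le_of_lt hx2p⟩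
  exact mul_lt_mul_of_pos_left (lam_strictAntiOn hp0 hp1 h1 h2 hx12) (by positivity)


/-- Fix `0 < p < 1` and let `κf` be the function assigning to each `τ ≥ 0`
the unique `κ > τ/p` with `(κ/2)·Λ*(τ/κ) = 1`.  Then `κf` is continuous and strictly
increasing on `[0,∞)`, `κf 0 = 2/ln(1/(1-p))`, and `κf τ ~ τ/p` as `τ → ∞`. -/
theorem stmt10 (p : ℝ) (hp0 : 0 < p) (hp1 : p < 1) (κf : ℝ → ℝ)
    (hκf : ∀ τ : ℝ, 0 ≤ τ → τ / p < κf τ ∧ κf τ / 2 * LambdaStar p (τ / κf τ) = 1)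
    (hκuniq : ∀ τ : ℝ, 0 ≤ τ → ∀ κ : ℝ, τ / p < κ → κ / 2 * LambdaStar p (τ / κ) = 1 →
      κ = κf τ) :
    ContinuousOn κf (Set.Ici 0) ∧ StrictMonoOn κf (Set.Ici 0) ∧
      κf 0 = 2 / Real.log (1 / (1 - p)) ∧
      Tendsto (fun τ => p * κf τ / τ) atTop (nhds 1) := by
  have hq : (0:ℝ) < 1 - p := by linarith
  have hL : 0 < Real.log (1 / (1 - p)) := by
    apply Real.log_pos
    rw [lt_div_iff₀ hq]; linarith
  -- value at 0
  have h0 := hκf 0 le_rfl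
  have hzero : κf 0 = 2 / Real.log (1 / (1 - p)) := by
    have := h0.2
    rw [zero_div, lam_zero] at this
    field_simp at this ⊢
    linarith
  -- strict monotonicity
  have hmono : StrictMonoOn κf (Set.Ici 0) := by
    intro τ₁ h1 τ₂ h2 h12
    simp only [Set.mem_Ici] at h1 h2
    by_contra hcon
    push_neg at hcon
    have hk2 := (hκf τ₂ h2).1
    by_cases hcase : τ₂ / p < κf τ₁
    · have e1 : κf τ₂ / 2 * LambdaStar p (τ₂ / κf τ₂) ≤
          κf τ₁ / 2 * LambdaStar p (τ₂ / κf τ₁) := by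
        rcases eq_or_lt_of_le hcon with h | h
        · rw [h]
        · exact le_of_lt (F_lt hp0 hp1 h2 hk2 h)
      have e2 := F_anti hp0 hp1 h1 h12 hcase
      rw [(hκf τ₂ h2).2, (hκf τ₁ h1).2] at *
      linarith
    · push_neg at hcase
      linarith
  -- surjectivity onto [κf 0, ∞)
  have hsurj : ∀ v : ℝ, κf 0 ≤ v → ∃ τ ∈ Set.Ici (0:ℝ), κf τ = v := by
    intro v hv
    have hv0 : 0 < v := lt_of_lt_of_le (by rw [hzero]; exact div_pos two_pos hL) hv
    set g : ℝ → ℝ := fun τ => v / 2 * LambdaStar p (τ / v) with hg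
    have hgc : ContinuousOn g (Set.Icc 0 (p * v)) := by
      apply ContinuousOn.mul continuousOn_const
      apply (lam_continuousOn hp0 hp1).comp (by fun_prop)
      intro τ hτ
      exact ⟨div_nonneg hτ.1 hv0.le, (div_le_iff₀ hv0).2 (by linarith [hτ.2, mul_comm p v])⟩
    have hgb : g (p * v) = 0 := by
      have : p * v / v = p := by field_simp
      rw [hg]; simp only [this, lam_p hp0 hp1, mul_zero]
    have hga : 1 ≤ g 0 := by
      rw [hg]; simp only [zero_div, lam_zero]
      rw [hzero] at hv
      rw [div_le_iff₀ hL] at hv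
      linarith
    have hiv := intermediate_value_Icc' (by positivity : (0:ℝ) ≤ p * v) hgc
    have h1mem : (1:ℝ) ∈ Set.Icc (g (p * v)) (g 0) := ⟨by rw [hgb]; norm_num, hga⟩
    obtain ⟨τ, hτmem, hτeq⟩ := hiv h1mem
    have hτne : τ < p * v := by
      rcases lt_or_eq_of_le hτmem.2 with h | h
      · exact h
      · exfalso; rw [h, hgb] at hτeq; norm_num at hτeq
    have hτp : τ / p < v := by rw [div_lt_iff₀ hp0]; linarith [mul_comm p v]
    have := hκuniq τ hτmem.1 v hτp hτeq
    exact ⟨τ, hτmem.1, this.symm⟩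
  -- continuity
  have hcont : ContinuousOn κf (Set.Ici 0) := by
    intro a ha
    simp only [Set.mem_Ici] at ha
    rcases eq_or_lt_of_le ha with h | h
    · subst h
      apply StrictMonoOn.continuousWithinAt_right_of_exists_between hmono self_mem_nhdsWithin
      intro b hb
      obtain ⟨c, hc, hceq⟩ := hsurj b (le_of_lt hb)
      exact ⟨c, hc, by rw [hceq]; exact ⟨hb, le_rfl⟩⟩
    · apply ContinuousAt.continuousWithinAt
      apply StrictMonoOn.continuousAt_of_exists_between hmono (Ici_mem_nhds h)
      · intro b hb
        by_cases hcase : κf 0 < b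
        · obtain ⟨c, hc, hceq⟩ := hsurj b (le_of_lt hcase)
          exact ⟨c, hc, by rw [hceq]; exact ⟨le_rfl, hb⟩⟩
        · push_neg at hcase
          refine ⟨0, Set.self_mem_Ici, hcase, ?_⟩
          exact hmono Set.self_mem_Ici (le_of_lt h) h
      · intro b hb
        obtain ⟨c, hc, hceq⟩ := hsurj b (le_of_lt (lt_of_le_of_lt
          (hmono.monotoneOn Set.self_mem_Ici (le_of_lt h) (le_of_lt h)) hb))
        exact ⟨c, hc, by rw [hceq]; exact ⟨hb, le_rfl⟩⟩
  -- asymptotics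
  have hasymp : Tendsto (fun τ => p * κf τ / τ) atTop (nhds 1) := by
    rw [Metric.tendsto_atTop]
    intro ε hε
    set c : ℝ := 1 + ε / 2 with hc
    have hc1 : 1 < c := by rw [hc]; linarith
    have hpc : p / c ∈ Set.Icc 0 p := by
      constructor
      · positivity
      · rw [div_le_iff₀ (by linarith)]; nlinarith
    have hpcp : p / c < p := by
      rw [div_lt_iff₀ (by linarith)]; nlinarith
    have hB : 0 < LambdaStar p (p / c) := by
      have := lam_strictAntiOn hp0 hp1 hpc ⟨le_of_lt hp0, le_rfl⟩ hpcp
      rw [lam_p hp0 hp1] at this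
      exact this
    set B := LambdaStar p (p / c) with hBdef
    refine ⟨max 1 (2 * p / (c * B)), fun τ hτ => ?_⟩
    have hτ1 : (1:ℝ) ≤ τ := le_trans (le_max_left _ _) hτ
    have hτ0 : 0 < τ := lt_of_lt_of_le one_pos hτ1
    have hτB : 2 * p / (c * B) ≤ τ := le_trans (le_max_right _ _) hτ
    have hk := (hκf τ (le_of_lt hτ0)).1
    have hupper : κf τ ≤ c * τ / p := by
      by_contra hcon
      push_neg at hcon
      have hmid : τ / p < c * τ / p := by
        apply div_lt_div_of_pos_right _ hp0
        nlinarith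
      have hF := F_lt hp0 hp1 (le_of_lt hτ0) hmid hcon
      rw [(hκf τ (le_of_lt hτ0)).2] at hF
      have hx : τ / (c * τ / p) = p / c := by
        field_simp
      rw [hx] at hF
      have : 1 ≤ c * τ / p / 2 * B := by
        rw [div_le_iff₀ (by positivity)] at hτB
        rw [← sub_nonneg]
        have : c * τ / p / 2 * B - 1 = (τ * (c * B) - 2 * p) / (2 * p) := by
          field_simp
        rw [this]
        apply div_nonneg _ (by positivity)
        linarith
      linarith
    have hlower : 1 < p * κf τ / τ := by
      rw [lt_div_iff₀ hτ0, one_mul]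
      have := (div_lt_iff₀ hp0).1 hk
      nlinarith
    have hupper' : p * κf τ / τ ≤ c := by
      rw [div_le_iff₀ hτ0]
      have : p * κf τ ≤ p * (c * τ / p) := by
        apply mul_le_mul_of_nonneg_left hupper (le_of_lt hp0)
      calc p * κf τ ≤ p * (c * τ / p) := this
        _ = c * τ := by field_simp
    rw [Real.dist_eq, abs_of_pos (by linarith)]
    rw [hc] at hupper'
    linarith
  exact ⟨hcont, hmono, hzero, hasymp⟩
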